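/- Let X be a connected locally compact second countable Hausdorff space, dx a regular Borel measure with full support, and (T_t)_{t≥0} a positive Feller contraction semigroup on Lᵖ(X, dx), 1 ≤ p < ∞. If there exists a continuous function f ∈ Lᵖ with f(x) > 0 for all x and T_t f = f for all t > 0, then the semigroup is irreducible: every invariant Borel set E is either null or co-null. -/

import Mathlib

open MeasureTheory Filter

/-- Theorem 14: let `X` be a connected locally compact second countable Hausdorff
space, `dx` a regular Borel measure of full support, and `(T_t)` a positive Feller
contraction semigroup on `Lᵖ(X, dx)` fixing a strictly positive continuous `f`.
Then the semigroup is irreducible: every invariant Borel set is null or co-null. -/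
theorem irreducible_of_connected
    {X : Type*} [TopologicalSpace X] [LocallyCompactSpace X]
    [SecondCountableTopology X] [T2Space X] [ConnectedSpace X]
    [MeasurableSpace X] [BorelSpace X]
    (μ : Measure X) [μ.Regular] [μ.IsOpenPosMeasure]
    (p : ENNReal) [Fact (1 ≤ p)] (hp : p ≠ ⊤)
    (T : ℝ → Lp ℝ p μ →L[ℝ] Lp ℝ p μ)
    (hT0 : T 0 = 1)
    (hsem : ∀ s t : ℝ, 0 ≤ s → 0 ≤ t → T (s + t) = (T s).comp (T t))
    (hcontr : ∀ t : ℝ, 0 ≤ t → ∀ g, ‖T t g‖ ≤ ‖g‖)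
    (hpos : ∀ t : ℝ, 0 ≤ t → ∀ g : Lp ℝ p μ, 0 ≤ g → 0 ≤ T t g)
    (hFeller : ∀ (t : ℝ), 0 < t → ∀ g : Lp ℝ p μ,
      ∃ gc : X → ℝ, Continuous gc ∧ ⇑(T t g) =ᵐ[μ] gc)
    (f : Lp ℝ p μ) (fc : X → ℝ) (hfc : Continuous fc) (hfcpos : ∀ x, 0 < fc x)
    (hfrep : ⇑f =ᵐ[μ] fc) (hfix : ∀ t : ℝ, 0 < t → T t f = f)
    (E : Set X) (hE : MeasurableSet E)
    (hEinv : ∀ g : Lp ℝ p μ, (∀ᵐ x ∂μ, x ∉ E → g x = 0) →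
      ∀ t : ℝ, 0 ≤ t → ∀ᵐ x ∂μ, x ∉ E → (T t g) x = 0) :
    μ E = 0 ∨ μ Eᶜ = 0 := by
  classical
  have hp1 : (1 : ENNReal) ≤ p := Fact.out
  have hp0 : p ≠ 0 := (zero_lt_one.trans_le hp1).ne'
  set q : ℝ := p.toReal with hqdef
  have hq : 0 < q := ENNReal.toReal_pos hp0 hp
  -- the truncated function g = f·1_E and its complement h = f·1_{Eᶜ}
  have gm : MemLp (E.indicator ⇑f) p μ := (Lp.memLp f).indicator hE
  set g : Lp ℝ p μ := gm.toLp _ with hgdef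
  have hg_coe : ⇑g =ᵐ[μ] E.indicator ⇑f := gm.coeFn_toLp
  set h : Lp ℝ p μ := f - g with hhdef
  have hh_coe : ⇑h =ᵐ[μ] fun x => f x - E.indicator (⇑f) x := by
    filter_upwards [Lp.coeFn_sub f g, hg_coe] with x h1 h2
    refine h1.trans ?_
    simp [h2]
  have hf_nonneg : ∀ᵐ x ∂μ, 0 ≤ f x := by
    filter_upwards [hfrep] with x hx
    rw [hx]; exact (hfcpos x).le
  have hg_nonneg : ∀ᵐ x ∂μ, 0 ≤ g x := by
    filter_upwards [hg_coe, hf_nonneg] with x h1 h2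
    rw [h1]
    exact Set.indicator_apply_nonneg fun _ => h2
  have hh_nonneg : ∀ᵐ x ∂μ, 0 ≤ h x := by
    filter_upwards [hh_coe, hf_nonneg] with x h1 h2
    rw [h1]
    by_cases hxE : x ∈ E <;>
      simp [Set.indicator_of_mem, Set.indicator_of_notMem, hxE, h2]
  have hg0 : 0 ≤ g := (Lp.coeFn_nonneg g).1 hg_nonneg
  have hh0 : 0 ≤ h := (Lp.coeFn_nonneg h).1 hh_nonneg
  -- invariance: T 1 g vanishes off E
  have hg_off : ∀ᵐ x ∂μ, x ∉ E → g x = 0 := by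
    filter_upwards [hg_coe] with x hx hxE
    rw [hx, Set.indicator_of_notMem hxE]
  have hTg_off : ∀ᵐ x ∂μ, x ∉ E → (T 1 g) x = 0 := hEinv g hg_off 1 zero_le_one
  have hTf : T 1 f = f := hfix 1 one_pos
  have hsplit : T 1 h = f - T 1 g := by rw [hhdef, map_sub, hTf]
  have hTh_nonneg : ∀ᵐ x ∂μ, 0 ≤ (T 1 h) x :=
    (Lp.coeFn_nonneg (T 1 h)).2 (hpos 1 zero_le_one h hh0)
  have hTh_coe : ⇑(T 1 h) =ᵐ[μ] fun x => f x - (T 1 g) x := by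
    rw [hsplit]; exact Lp.coeFn_sub f (T 1 g)
  -- pointwise a.e.: h ≤ T 1 h
  have hha : ∀ᵐ x ∂μ, h x ≤ (T 1 h) x := by
    filter_upwards [hh_coe, hTh_coe, hTg_off, hTh_nonneg] with x h1 h2 h3 h4
    by_cases hxE : x ∈ E
    · rw [h1, Set.indicator_of_mem hxE]
      simpa using h4
    · rw [h1, h2, Set.indicator_of_notMem hxE, h3 hxE]
  -- contraction forces equality: h = T 1 h a.e.
  have key : ⇑h =ᵐ[μ] ⇑(T 1 h) := by
    have hmono : eLpNorm (⇑h) p μ ≤ eLpNorm (⇑(T 1 h)) p μ := by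
      refine eLpNorm_mono_ae ?_
      filter_upwards [hha, hh_nonneg] with x h1 h2
      rw [Real.norm_eq_abs, Real.norm_eq_abs, abs_of_nonneg h2, abs_of_nonneg (h2.trans h1)]
      exact h1
    have heq : eLpNorm (⇑(T 1 h)) p μ = eLpNorm (⇑h) p μ := by
      refine le_antisymm ?_ hmono
      have h1 : (eLpNorm (⇑(T 1 h)) p μ).toReal ≤ (eLpNorm (⇑h) p μ).toReal := by
        rw [← Lp.norm_def, ← Lp.norm_def]
        exact hcontr 1 zero_le_one h
      exact (ENNReal.toReal_le_toReal (Lp.eLpNorm_ne_top _) (Lp.eLpNorm_ne_top _)).1 h1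
    have hlint : ∫⁻ x, (‖(T 1 h) x‖₊ : ENNReal) ^ q ∂μ = ∫⁻ x, (‖h x‖₊ : ENNReal) ^ q ∂μ := by
      have h2 := heq
      rw [eLpNorm_eq_lintegral_rpow_enorm_toReal hp0 hp, eLpNorm_eq_lintegral_rpow_enorm_toReal hp0 hp] at h2
      have h3 := congrArg (fun z : ENNReal => z ^ q) h2
      simp [← hqdef, ← ENNReal.rpow_mul, one_div, inv_mul_cancel₀ hq.ne'] at h3
      exact h3
    have hfin : ∫⁻ x, (‖h x‖₊ : ENNReal) ^ q ∂μ ≠ ⊤ :=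
      (lintegral_rpow_enorm_lt_top_of_eLpNorm_lt_top hp0 hp (Lp.eLpNorm_lt_top h)).ne
    have hle_pow : (fun x => (‖h x‖₊ : ENNReal) ^ q) ≤ᵐ[μ] fun x => (‖(T 1 h) x‖₊ : ENNReal) ^ q := by
      filter_upwards [hha, hh_nonneg] with x h1 h2
      refine ENNReal.rpow_le_rpow ?_ hq.le
      have hn : ‖h x‖ ≤ ‖(T 1 h) x‖ := by
        rw [Real.norm_eq_abs, Real.norm_eq_abs, abs_of_nonneg h2, abs_of_nonneg (h2.trans h1)]
        exact h1
      exact_mod_cast hn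
    have hmeas : AEMeasurable (fun x => (‖(T 1 h) x‖₊ : ENNReal) ^ q) μ :=
      (AEStronglyMeasurable.aemeasurable (Lp.aestronglyMeasurable (T 1 h))).enorm.pow_const q
    have hae := ae_eq_of_ae_le_of_lintegral_le hle_pow hfin hmeas hlint.le
    filter_upwards [hae, hha, hh_nonneg] with x h1 h2 h3
    have h4 : (‖h x‖₊ : ENNReal) = ‖(T 1 h) x‖₊ :=
      ENNReal.rpow_left_injective hq.ne' h1
    have h5 : ‖h x‖ = ‖(T 1 h) x‖ := by
      have := ENNReal.coe_inj.1 h4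
      simpa [nnnorm, ← NNReal.coe_inj] using congrArg NNReal.toReal this
    rw [Real.norm_eq_abs, Real.norm_eq_abs, abs_of_nonneg h3, abs_of_nonneg (h3.trans h2)] at h5
    exact h5
  -- hence T 1 g = f·1_E = fc·1_E a.e.
  have hTg_eq : ⇑(T 1 g) =ᵐ[μ] E.indicator fc := by
    have hgid : T 1 g = f - T 1 h := by rw [hsplit]; abel
    have h1 : ⇑(T 1 g) =ᵐ[μ] fun x => f x - (T 1 h) x := by
      rw [hgid]; exact Lp.coeFn_sub f (T 1 h)
    filter_upwards [h1, key, hh_coe, hfrep] with x e1 e2 e3 e4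
    rw [e1, ← e2, e3]
    by_cases hxE : x ∈ E <;>
      simp [Set.indicator_of_mem, Set.indicator_of_notMem, hxE, e4]
  -- Feller: continuous representative
  obtain ⟨u, hu_cont, hu_eq⟩ := hFeller 1 one_pos g
  have hu : ∀ᵐ x ∂μ, u x = E.indicator fc x := hu_eq.symm.trans hTg_eq
  -- topology
  set U : Set X := {x | 0 < u x} with hUdef
  set V : Set X := {x | u x < fc x} with hVdef
  have hUopen : IsOpen U := isOpen_lt continuous_const hu_cont
  have hVopen : IsOpen V := isOpen_lt hu_cont hfc
  have hcover : ∀ x, x ∈ U ∨ x ∈ V := by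
    intro x
    rcases le_or_gt (u x) 0 with hc | hc
    · exact Or.inr (hc.trans_lt (hfcpos x))
    · exact Or.inl hc
  have hdisj : U ∩ V = ∅ := by
    by_contra hne
    have hposm : 0 < μ (U ∩ V) :=
      (hUopen.inter hVopen).measure_pos μ (Set.nonempty_iff_ne_empty.2 hne)
    have hzero : μ (U ∩ V) = 0 := by
      refine measure_eq_zero_iff_ae_notMem.2 ?_
      filter_upwards [hu] with x hx
      rintro ⟨h1, h2⟩
      simp only [hUdef, Set.mem_setOf_eq] at h1
      simp only [hVdef, Set.mem_setOf_eq] at h2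
      by_cases hxE : x ∈ E
      · rw [hx, Set.indicator_of_mem hxE] at h2
        exact absurd h2 (lt_irrefl _)
      · rw [hx, Set.indicator_of_notMem hxE] at h1
        exact absurd h1 (lt_irrefl _)
    rw [hzero] at hposm
    exact absurd hposm (lt_irrefl _)
  have hVcompl : V = Uᶜ := by
    ext x
    simp only [Set.mem_compl_iff]
    constructor
    · intro hxV hxU
      have hc : x ∈ U ∩ V := ⟨hxU, hxV⟩
      rw [hdisj] at hc
      exact hc
    · intro hxU
      exact (hcover x).resolve_left hxU
  have hclopen : IsClopen U :=
    ⟨isOpen_compl_iff.mp (hVcompl ▸ hVopen), hUopen⟩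
  rcases isClopen_iff.mp hclopen with hempty | huniv
  · left
    refine measure_eq_zero_iff_ae_notMem.2 ?_
    filter_upwards [hu] with x hx hxE
    have h1 : 0 < u x := by
      rw [hx, Set.indicator_of_mem hxE]; exact hfcpos x
    exact (Set.eq_empty_iff_forall_notMem.mp hempty x) h1
  · right
    refine measure_eq_zero_iff_ae_notMem.2 ?_
    filter_upwards [hu] with x hx hxEc
    have h1 : 0 < u x := by
      have : x ∈ U := huniv.symm ▸ Set.mem_univ x
      exact this
    rw [hx, Set.indicator_of_notMem hxEc] at h1
    exact absurd h1 (lt_irrefl _)
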